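/- Let x̄ ∈ Q_0 be a local Geoffrion properly efficient solution of (VP) and suppose the weak Abadie regularity condition (WARC) holds at x̄, i.e., L(Q; x̄) := L²(Q; x̄, 0) ⊂ T(Q_0; x̄). Then there is no u ∈ X satisfying: f_i°(x̄, u) ≤ 0 for all i ∈ I, f_i°(x̄, u) < 0 for at least one i ∈ I, and g_j°(x̄, u) ≤ 0 for all j ∈ J(x̄). -/

import Mathlib

open Filter Topology Set

/-- `F` is locally Lipschitz at `xbar`: Lipschitz on some neighborhood of `xbar`. -/
def LocallyLipschitzAt {X : Type*} [NormedAddCommGroup X] (F : X → ℝ) (xbar : X) : Prop :=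
  ∃ L : ℝ, 0 ≤ L ∧ ∃ U ∈ 𝓝 xbar, ∀ x ∈ U, ∀ y ∈ U, |F x - F y| ≤ L * ‖x - y‖

/-- The Clarke generalized directional derivative
`F°(xbar, u) = limsup_{x → xbar, t ↓ 0} (F(x + t u) - F x) / t`. -/
noncomputable def clarkeD {X : Type*} [NormedAddCommGroup X] [NormedSpace ℝ X]
    (F : X → ℝ) (xbar u : X) : ℝ :=
  Filter.limsup (fun p : X × ℝ => (F (p.1 + p.2 • u) - F p.1) / p.2)
    ((𝓝 xbar) ×ˢ (𝓝[>] (0:ℝ)))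

/-- The second-order upper generalized directional derivative
`F°°(xbar, u) = limsup_{t ↓ 0} (F(xbar + t u) - F xbar - t F°(xbar, u)) / (t²/2)`,
a value in the extended reals. -/
noncomputable def clarkeD2 {X : Type*} [NormedAddCommGroup X] [NormedSpace ℝ X]
    (F : X → ℝ) (xbar u : X) : EReal :=
  Filter.limsup
    (fun t : ℝ =>
      (((F (xbar + t • u) - F xbar - t * clarkeD F xbar u) / (t ^ 2 / 2) : ℝ) : EReal))
    (𝓝[>] (0:ℝ))

/-- The feasible set `Q₀ = {x : g j x ≤ 0 for all j}`. -/
def Q0set {X : Type*} {m : ℕ} (g : Fin m → X → ℝ) : Set X := {x | ∀ j, g j x ≤ 0}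

/-- `(a, b) ≤_lex (0, 0)` where the second component is an extended real. -/
def lexLe (a : ℝ) (b : EReal) : Prop := a < 0 ∨ (a = 0 ∧ b ≤ 0)

/-- `(a, b) <_lex (0, 0)` where the second component is an extended real. -/
def lexLt (a : ℝ) (b : EReal) : Prop := a < 0 ∨ (a = 0 ∧ b < 0)

/-- The set `L²(Q₀; xbar, u)`. -/
def L2Q0 {X : Type*} [NormedAddCommGroup X] [NormedSpace ℝ X] {m : ℕ}
    (g : Fin m → X → ℝ) (xbar u : X) : Set X :=
  {v | ∀ j, g j xbar = 0 →
    lexLe (clarkeD (g j) xbar u) ((clarkeD (g j) xbar v : EReal) + clarkeD2 (g j) xbar u)}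

/-- The set `L₀²(Q₀; xbar, u)`. -/
def L2Q0strict {X : Type*} [NormedAddCommGroup X] [NormedSpace ℝ X] {m : ℕ}
    (g : Fin m → X → ℝ) (xbar u : X) : Set X :=
  {v | ∀ j, g j xbar = 0 →
    lexLt (clarkeD (g j) xbar u) ((clarkeD (g j) xbar v : EReal) + clarkeD2 (g j) xbar u)}

/-- The set `L²(Q; xbar, u)`, where `Q = Q₀ ∩ {x : f i x ≤ f i xbar}`. -/
def L2Q {X : Type*} [NormedAddCommGroup X] [NormedSpace ℝ X] {p m : ℕ}
    (f : Fin p → X → ℝ) (g : Fin m → X → ℝ) (xbar u : X) : Set X :=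
  {v | (∀ i, lexLe (clarkeD (f i) xbar u)
          ((clarkeD (f i) xbar v : EReal) + clarkeD2 (f i) xbar u)) ∧
       (∀ j, g j xbar = 0 →
          lexLe (clarkeD (g j) xbar u)
            ((clarkeD (g j) xbar v : EReal) + clarkeD2 (g j) xbar u))}

/-- The second-order tangent set `T²(Ω; xbar, u)`. -/
def secondTangentSet {X : Type*} [NormedAddCommGroup X] [NormedSpace ℝ X]
    (Ω : Set X) (xbar u : X) : Set X :=
  {v | ∃ t : ℕ → ℝ, ∃ w : ℕ → X, (∀ k, 0 < t k) ∧ Tendsto t atTop (𝓝 0) ∧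
       Tendsto w atTop (𝓝 v) ∧ ∀ k, xbar + (t k) • u + ((t k) ^ 2 / 2) • w k ∈ Ω}

/-- The (contingent) tangent cone `T(Ω; xbar)`. -/
def tangentCone' {X : Type*} [NormedAddCommGroup X] [NormedSpace ℝ X]
    (Ω : Set X) (xbar : X) : Set X :=
  {d | ∃ t : ℕ → ℝ, ∃ w : ℕ → X, (∀ k, 0 < t k) ∧ Tendsto t atTop (𝓝 0) ∧
       Tendsto w atTop (𝓝 d) ∧ ∀ k, xbar + (t k) • w k ∈ Ω}

/-- The set `A(xbar; u)`. -/
def Aset {X : Type*} [NormedAddCommGroup X] [NormedSpace ℝ X] {m : ℕ}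
    (g : Fin m → X → ℝ) (xbar u : X) : Set X :=
  {v | ∀ j, g j xbar = 0 → clarkeD (g j) xbar u = 0 →
    ∃ δ > 0, ∀ t ∈ Set.Ioo (0:ℝ) δ, g j (xbar + t • u + (t ^ 2 / 2) • v) ≤ 0}

/-- The set `B(xbar; u)`. -/
def Bset {X : Type*} [NormedAddCommGroup X] [NormedSpace ℝ X] {m : ℕ}
    (g : Fin m → X → ℝ) (xbar u : X) : Set X :=
  {v | ∀ j, g j xbar = 0 → clarkeD (g j) xbar u = 0 →
    (clarkeD (g j) xbar v : EReal) + clarkeD2 (g j) xbar u ≤ 0}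

/-- `u` is a critical direction of (VP) at `xbar`. -/
def IsCriticalDir {X : Type*} [NormedAddCommGroup X] [NormedSpace ℝ X] {p m : ℕ}
    (f : Fin p → X → ℝ) (g : Fin m → X → ℝ) (xbar u : X) : Prop :=
  (∀ i, clarkeD (f i) xbar u ≤ 0) ∧ (∃ i, clarkeD (f i) xbar u = 0) ∧
  (∀ j, g j xbar = 0 → clarkeD (g j) xbar u ≤ 0)

/-- `xbar` is a local weak efficient solution of (VP). -/
def LocalWeakEff {X : Type*} [NormedAddCommGroup X] {p m : ℕ}
    (f : Fin p → X → ℝ) (g : Fin m → X → ℝ) (xbar : X) : Prop :=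
  ∃ U ∈ 𝓝 xbar, ∀ x ∈ U, x ∈ Q0set g → ¬ (∀ i, f i x < f i xbar)

/-- `xbar` is a local Geoffrion properly efficient solution of (VP). -/
def LocalGeoffrionEff {X : Type*} [NormedAddCommGroup X] {p m : ℕ}
    (f : Fin p → X → ℝ) (g : Fin m → X → ℝ) (xbar : X) : Prop :=
  ∃ U ∈ 𝓝 xbar,
    (∀ x ∈ U, x ∈ Q0set g → (∀ i, f i x ≤ f i xbar) → (∀ i, f i x = f i xbar)) ∧
    ∃ M > (0:ℝ), ∀ i, ∀ x ∈ U, x ∈ Q0set g → f i x < f i xbar →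
      ∃ j, f j xbar < f j x ∧ (f i xbar - f i x) / (f j x - f j xbar) ≤ M

lemma quotient_bound {X : Type*} [NormedAddCommGroup X] [NormedSpace ℝ X]
    (F : X → ℝ) (xbar u : X) (hF : LocallyLipschitzAt F xbar)
    (t : ℕ → ℝ) (w : ℕ → X) (ht : ∀ k, 0 < t k) (ht0 : Tendsto t atTop (𝓝 0))
    (hw : Tendsto w atTop (𝓝 u)) {ε : ℝ} (hε : 0 < ε) :
    ∀ᶠ k in atTop, (F (xbar + t k • w k) - F xbar) / t k < clarkeD F xbar u + ε := by
  obtain ⟨L, hL0, U, hU, hLip⟩ := hF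
  obtain ⟨r, hr, hball⟩ := Metric.mem_nhds_iff.mp hU
  set δ : ℝ := r / (2 * (‖u‖ + 1)) with hδdef
  have hδ : 0 < δ := by positivity
  -- boundedness of the quotient on the product filter
  have hbd_ev : ∀ᶠ p in (𝓝 xbar) ×ˢ (𝓝[>] (0:ℝ)),
      (F (p.1 + p.2 • u) - F p.1) / p.2 ≤ L * ‖u‖ := by
    filter_upwards [Filter.prod_mem_prod (Metric.ball_mem_nhds xbar (by positivity : (0:ℝ) < r/2))
      (Ioo_mem_nhdsGT_of_mem ⟨le_rfl, hδ⟩)] with p hp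
    obtain ⟨hp1, hp2⟩ := hp
    have hp2pos : 0 < p.2 := hp2.1
    have hnorm : ‖p.2 • u‖ < r / 2 := by
      rw [norm_smul, Real.norm_eq_abs, abs_of_pos hp2pos]
      calc p.2 * ‖u‖ ≤ p.2 * (‖u‖ + 1) := by nlinarith [hp2pos.le]
        _ < δ * (‖u‖ + 1) := by
            have : (0:ℝ) < ‖u‖ + 1 := by positivity
            exact (mul_lt_mul_iff_left₀ this).mpr hp2.2
        _ = r / 2 := by rw [hδdef]; field_simp
    have h1 : p.1 ∈ U := hball (by
      have := mem_ball_iff_norm.mp hp1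
      exact Metric.mem_ball.mpr (lt_trans (Metric.mem_ball.mp hp1) (by linarith)))
    have h2 : p.1 + p.2 • u ∈ U := by
      apply hball
      rw [Metric.mem_ball, dist_eq_norm]
      have : ‖p.1 + p.2 • u - xbar‖ ≤ ‖p.1 - xbar‖ + ‖p.2 • u‖ := by
        have : p.1 + p.2 • u - xbar = (p.1 - xbar) + p.2 • u := by abel
        rw [this]; exact norm_add_le _ _
      have hb := mem_ball_iff_norm.mp hp1
      linarith
    have habs := hLip _ h2 _ h1
    have : F (p.1 + p.2 • u) - F p.1 ≤ L * (p.2 * ‖u‖) := by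
      have := le_trans (le_abs_self _) habs
      have heq : p.1 + p.2 • u - p.1 = p.2 • u := by abel
      rw [heq, norm_smul, Real.norm_eq_abs, abs_of_pos hp2pos] at this
      linarith
    rw [div_le_iff₀ hp2pos]
    calc F (p.1 + p.2 • u) - F p.1 ≤ L * (p.2 * ‖u‖) := this
      _ = L * ‖u‖ * p.2 := by ring
  have hbd : IsBoundedUnder (· ≤ ·) ((𝓝 xbar) ×ˢ (𝓝[>] (0:ℝ)))
      (fun p : X × ℝ => (F (p.1 + p.2 • u) - F p.1) / p.2) :=
    ⟨L * ‖u‖, by simpa [eventually_map] using hbd_ev⟩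
  have hlt : Filter.limsup (fun p : X × ℝ => (F (p.1 + p.2 • u) - F p.1) / p.2)
      ((𝓝 xbar) ×ˢ (𝓝[>] (0:ℝ))) < clarkeD F xbar u + ε / 2 := by
    have : clarkeD F xbar u = Filter.limsup (fun p : X × ℝ => (F (p.1 + p.2 • u) - F p.1) / p.2)
      ((𝓝 xbar) ×ˢ (𝓝[>] (0:ℝ))) := rfl
    linarith [this ▸ (by linarith : clarkeD F xbar u < clarkeD F xbar u + ε/2)]
  have heev := eventually_lt_of_limsup_lt hlt hbd
  have htends : Tendsto (fun k => ((xbar : X), t k)) atTop ((𝓝 xbar) ×ˢ (𝓝[>] (0:ℝ))) :=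
    Tendsto.prodMk tendsto_const_nhds
      (tendsto_nhdsWithin_iff.mpr ⟨ht0, Eventually.of_forall ht⟩)
  have e1 : ∀ᶠ k in atTop, (F (xbar + t k • u) - F xbar) / t k < clarkeD F xbar u + ε / 2 :=
    htends.eventually heev
  -- t k • w k → 0 and t k • u → 0
  have hsw : Tendsto (fun k => t k • w k) atTop (𝓝 (0:X)) := by
    have := ht0.smul hw; simpa using this
  have hsu : Tendsto (fun k => t k • u) atTop (𝓝 (0:X)) := by
    have := ht0.smul (tendsto_const_nhds (x := u)); simpa using this
  have e2 : ∀ᶠ k in atTop, ‖t k • w k‖ < r ∧ ‖t k • u‖ < r := by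
    have a : Tendsto (fun k => ‖t k • w k‖) atTop (𝓝 0) := by simpa using hsw.norm
    have b : Tendsto (fun k => ‖t k • u‖) atTop (𝓝 0) := by simpa using hsu.norm
    exact (a.eventually_lt_const hr).and (b.eventually_lt_const hr)
  have e3 : ∀ᶠ k in atTop, L * ‖w k - u‖ < ε / 2 := by
    have a : Tendsto (fun k => L * ‖w k - u‖) atTop (𝓝 (L * 0)) :=
      ((tendsto_iff_norm_sub_tendsto_zero.mp hw).const_mul L)
    rw [mul_zero] at a
    exact a.eventually_lt_const (by linarith)
  filter_upwards [e1, e2, e3] with k h1 ⟨h2w, h2u⟩ h3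
  have htk := ht k
  have mw : xbar + t k • w k ∈ U := hball (by
    rw [Metric.mem_ball, dist_eq_norm]; simpa using h2w)
  have mu : xbar + t k • u ∈ U := hball (by
    rw [Metric.mem_ball, dist_eq_norm]; simpa using h2u)
  have hdiff : F (xbar + t k • w k) - F (xbar + t k • u) ≤ L * (t k * ‖w k - u‖) := by
    have := le_trans (le_abs_self _) (hLip _ mw _ mu)
    have heq : xbar + t k • w k - (xbar + t k • u) = t k • (w k - u) := by
      rw [smul_sub]; abel
    rw [heq, norm_smul, Real.norm_eq_abs, abs_of_pos htk] at this
    linarith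
  have key : (F (xbar + t k • w k) - F xbar) / t k
      ≤ L * ‖w k - u‖ + (F (xbar + t k • u) - F xbar) / t k := by
    have : (F (xbar + t k • w k) - F xbar) / t k
        = (F (xbar + t k • w k) - F (xbar + t k • u)) / t k
          + (F (xbar + t k • u) - F xbar) / t k := by ring
    rw [this]
    have : (F (xbar + t k • w k) - F (xbar + t k • u)) / t k ≤ L * ‖w k - u‖ := by
      rw [div_le_iff₀ htk]
      calc F (xbar + t k • w k) - F (xbar + t k • u) ≤ L * (t k * ‖w k - u‖) := hdiff
        _ = L * ‖w k - u‖ * t k := by ring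
    linarith
  linarith


lemma clarkeD_zero {X : Type*} [NormedAddCommGroup X] [NormedSpace ℝ X]
    (F : X → ℝ) (xbar : X) : clarkeD F xbar 0 = 0 := by
  unfold clarkeD
  have h : (fun p : X × ℝ => (F (p.1 + p.2 • (0:X)) - F p.1) / p.2) = fun _ => (0:ℝ) := by
    funext p; simp
  rw [h]
  haveI : ((𝓝 xbar) ×ˢ (𝓝[>] (0:ℝ))).NeBot := Filter.prod_neBot.mpr ⟨inferInstance, inferInstance⟩
  exact limsup_const 0

lemma clarkeD2_zero {X : Type*} [NormedAddCommGroup X] [NormedSpace ℝ X]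
    (F : X → ℝ) (xbar : X) : clarkeD2 F xbar 0 = 0 := by
  unfold clarkeD2
  have h : (fun t : ℝ =>
      (((F (xbar + t • (0:X)) - F xbar - t * clarkeD F xbar 0) / (t ^ 2 / 2) : ℝ) : EReal))
      = fun _ => ((0:ℝ) : EReal) := by
    funext t; simp [clarkeD_zero]
  rw [h]
  simpa using limsup_const (α := EReal) (f := 𝓝[>] (0:ℝ)) ((0:ℝ):EReal)

/-- Corollary 5.2: if `xbar` is a local Geoffrion properly efficient solution
of (VP) and (WARC) holds at `xbar`, then the system `f_i°(xbar,u) ≤ 0 (i ∈ I)`, with strict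
inequality for at least one `i`, and `g_j°(xbar,u) ≤ 0 (j ∈ J(xbar))`, has no solution. -/
theorem strong_first_order_primal_kkt
    {X : Type*} [NormedAddCommGroup X] [NormedSpace ℝ X] [CompleteSpace X]
    {p m : ℕ} (f : Fin p → X → ℝ) (g : Fin m → X → ℝ) (xbar : X)
    (hx : xbar ∈ Q0set g)
    (hf : ∀ i, LocallyLipschitzAt (f i) xbar)
    (hg : ∀ j, g j xbar = 0 → LocallyLipschitzAt (g j) xbar)
    (hgc : ∀ j, g j xbar ≠ 0 → ContinuousAt (g j) xbar)
    (hgeo : LocalGeoffrionEff f g xbar)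
    (hWARC : L2Q f g xbar 0 ⊆ tangentCone' (Q0set g) xbar) :
    ¬ ∃ u : X,
      (∀ i, clarkeD (f i) xbar u ≤ 0) ∧
      (∃ i, clarkeD (f i) xbar u < 0) ∧
      (∀ j, g j xbar = 0 → clarkeD (g j) xbar u ≤ 0) := by
  rintro ⟨u, hfu, ⟨i0, hi0⟩, hgu⟩
  -- u ∈ L2Q f g xbar 0
  have humem : u ∈ L2Q f g xbar 0 := by
    constructor
    · intro i
      exact Or.inr ⟨clarkeD_zero _ _, by
        rw [clarkeD2_zero, add_zero]
        exact_mod_cast EReal.coe_nonpos.mpr (hfu i)⟩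
    · intro j hj
      exact Or.inr ⟨clarkeD_zero _ _, by
        rw [clarkeD2_zero, add_zero]
        exact_mod_cast EReal.coe_nonpos.mpr (hgu j hj)⟩
  obtain ⟨t, w, htpos, ht0, hw, hQ⟩ := hWARC humem
  obtain ⟨U, hU, heff, M, hM, hprop⟩ := hgeo
  set c : ℝ := -clarkeD (f i0) xbar u with hcdef
  have hc : 0 < c := by simp [hcdef]; linarith
  -- x_k → xbar
  have hxk : Tendsto (fun k => xbar + t k • w k) atTop (𝓝 xbar) := by
    have hsw : Tendsto (fun k => t k • w k) atTop (𝓝 (0:X)) := by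
      have := ht0.smul hw; simpa using this
    have := tendsto_const_nhds (x := xbar) (f := atTop (α := ℕ)) |>.add hsw
    simpa using this
  have E1 : ∀ᶠ k in atTop, (xbar + t k • w k) ∈ U := hxk.eventually_mem hU
  have E2 : ∀ᶠ k in atTop,
      (f i0 (xbar + t k • w k) - f i0 xbar) / t k < clarkeD (f i0) xbar u + c / 2 :=
    quotient_bound (f i0) xbar u (hf i0) t w htpos ht0 hw (by linarith)
  have E3 : ∀ᶠ k in atTop, ∀ j : Fin p,
      (f j (xbar + t k • w k) - f j xbar) / t k < clarkeD (f j) xbar u + c / (2 * M) := by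
    rw [eventually_all]
    intro j
    exact quotient_bound (f j) xbar u (hf j) t w htpos ht0 hw (by positivity)
  obtain ⟨k, h1, h2, h3⟩ := (E1.and (E2.and E3)).exists
  set x := xbar + t k • w k with hxdef
  have htk := htpos k
  have hxQ : x ∈ Q0set g := hQ k
  have hA : (c / 2) * t k < f i0 xbar - f i0 x := by
    have h2' : (f i0 x - f i0 xbar) / t k < -(c / 2) := by
      rw [hcdef] at h2 ⊢; linarith
    have := (div_lt_iff₀ htk).mp h2'
    nlinarith
  have hi0lt : f i0 x < f i0 xbar := by nlinarith
  obtain ⟨j, hjlt, hjdiv⟩ := hprop i0 x h1 hxQ hi0lt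
  have hden : 0 < f j x - f j xbar := by linarith
  have hnum : f i0 xbar - f i0 x ≤ M * (f j x - f j xbar) :=
    (div_le_iff₀ hden).mp hjdiv
  -- from E3: (f j x - f j xbar)/t k < c/(2M)
  have hB : (f j x - f j xbar) / t k < c / (2 * M) := by
    have := h3 j
    have hle := hfu j
    linarith
  have hB' : f j x - f j xbar < c / (2 * M) * t k := (div_lt_iff₀ htk).mp hB
  have : (c / 2) * t k < M * (c / (2 * M) * t k) := by
    calc (c / 2) * t k < f i0 xbar - f i0 x := hA
      _ ≤ M * (f j x - f j xbar) := hnum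
      _ < M * (c / (2 * M) * t k) := by
          exact (mul_lt_mul_iff_right₀ hM).mpr hB'
  have heq : M * (c / (2 * M) * t k) = (c / 2) * t k := by field_simp
  rw [heq] at this
  exact lt_irrefl _ this
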